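/- Let K be a field and α = Σ_{i ≤ −1} c_i T^i ∈ K((T⁻¹)) a formal Laurent series of positive order. For j ≥ 1, let H_j(α) be the j × j Hankel matrix whose (k, l) entry is c_{−(k+l−1)} for 1 ≤ k, l ≤ j. Then α has a convergent p_n/q_n with deg q_n = j if and only if det H_j(α) ≠ 0. -/

import Mathlib

noncomputable section

namespace PaperCF

variable {K : Type*} [Field K]

/-- The element `T` of `K((T⁻¹))`, where `K((T⁻¹))` is modeled as the field
`LaurentSeries K` of Laurent series in the variable `t = T⁻¹`. -/
def Tvar (K : Type*) [Field K] : LaurentSeries K := (HahnSeries.single (-1 : ℤ) (1 : K))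

/-- The embedding of `K[T]` into `K((T⁻¹))`, sending the polynomial variable to `T = t⁻¹`. -/
def emb : Polynomial K →+* LaurentSeries K := (Polynomial.aeval (Tvar K)).toRingHom

/-- The polynomial part `⌊α⌋` of a formal Laurent series `α ∈ K((T⁻¹))`. -/
def polyPart (α : LaurentSeries K) : Polynomial K :=
  ∑ i ∈ Finset.range ((-α.order).toNat + 1), Polynomial.monomial i (α.coeff (-(i : ℤ)))

/-- The complete quotients `αₙ` of the regular continued fraction expansion of `α`
(with the convention `0⁻¹ = 0`, so that `cq α n = 0` for all `n` past the end of a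
finite expansion). -/
def cq (α : LaurentSeries K) : ℕ → LaurentSeries K
  | 0 => α
  | n + 1 => (cq α n - emb (polyPart (cq α n)))⁻¹

/-- The partial quotients `aₙ = ⌊αₙ⌋` of the regular continued fraction expansion of `α`. -/
def pq (α : LaurentSeries K) (n : ℕ) : Polynomial K := polyPart (cq α n)

/-- The continuants `(pₙ, qₙ)` of the regular continued fraction expansion of `α`. -/
def cont (α : LaurentSeries K) : ℕ → Polynomial K × Polynomial K
  | 0 => (pq α 0, 1)
  | 1 => (pq α 1 * pq α 0 + 1, pq α 1)
  | n + 2 => (pq α (n + 2) * (cont α (n + 1)).1 + (cont α n).1,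
              pq α (n + 2) * (cont α (n + 1)).2 + (cont α n).2)

/-- `pₙ`. -/
def contP (α : LaurentSeries K) (n : ℕ) : Polynomial K := (cont α n).1

/-- `qₙ`. -/
def contQ (α : LaurentSeries K) (n : ℕ) : Polynomial K := (cont α n).2

/-- The `n`-th partial quotient (and hence the `n`-th convergent) of `α` genuinely exists. -/
def ConvAt (α : LaurentSeries K) (n : ℕ) : Prop := n = 0 ∨ cq α n ≠ 0

/-- `K(α) = sup_{n ≥ 1} deg aₙ`, as an extended natural number. -/
def KK (α : LaurentSeries K) : ℕ∞ :=
  ⨆ n : {n : ℕ // 1 ≤ n ∧ cq α n ≠ 0}, ((pq α n.1).natDegree : ℕ∞)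

/-- `ōK(α) = limsup_n deg aₙ`. -/
def KKbar (α : LaurentSeries K) : ℕ∞ :=
  Filter.limsup (fun n => ((pq α n).natDegree : ℕ∞)) Filter.atTop

/-- `α` is a rational function, i.e. an element of `K(T) ⊆ K((T⁻¹))`. -/
def IsRat (α : LaurentSeries K) : Prop :=
  ∃ p q : Polynomial K, q ≠ 0 ∧ α * emb q = emb p

/-- Two Laurent series are equivalent if they differ by a Möbius transformation with
matrix in `GL₂(K[T])`. -/
def MEquiv (α β : LaurentSeries K) : Prop :=
  ∃ a b c d : Polynomial K, IsUnit (a * d - b * c) ∧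
    emb c * α + emb d ≠ 0 ∧ β = (emb a * α + emb b) / (emb c * α + emb d)

end PaperCF

namespace PaperCF

/-- The `j × j` Hankel matrix of `α = Σ_{i ≤ -1} c_i T^i`: its `(k, l)` entry (0-indexed)
is `c_{-(k+l+1)}`, i.e. the coefficient of `t^(k+l+1)` where `t = T⁻¹`. -/
def hankel {K : Type*} [Field K] (α : LaurentSeries K) (j : ℕ) :
    Matrix (Fin j) (Fin j) K :=
  Matrix.of fun k l => α.coeff ((k.1 : ℤ) + (l.1 : ℤ) + 1)

end PaperCF

namespace PaperCF
variable {K : Type*} [Field K]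

-- auxiliary
lemma hahn_sum_coeff {ι : Type*} (s : Finset ι) (f : ι → LaurentSeries K) (r : ℤ) :
    (∑ i ∈ s, f i).coeff r = ∑ i ∈ s, (f i).coeff r := by
  induction s using Finset.cons_induction with
  | empty => simp
  | cons a s ha ih => simp [Finset.sum_cons, HahnSeries.coeff_add, ih]

lemma emb_monomial (n : ℕ) (a : K) :
    emb (Polynomial.monomial n a) = HahnSeries.single (-(n:ℤ)) a := by
  simp only [emb, AlgHom.toRingHom_eq_coe, RingHom.coe_coe, Polynomial.aeval_monomial, Tvar]
  rw [HahnSeries.single_pow]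
  have h : (algebraMap K (LaurentSeries K)) a = HahnSeries.single (0:ℤ) a := by
    rw [HahnSeries.algebraMap_apply' (Γ := ℤ) (R := K), PowerSeries.algebraMap_apply]
    simp [HahnSeries.ofPowerSeries_C, HahnSeries.C_apply]
  rw [h, HahnSeries.single_mul_single]
  simp

lemma emb_coeff (P : Polynomial K) (r : ℤ) :
    (emb P).coeff r = if r ≤ 0 then P.coeff (-r).toNat else 0 := by
  induction P using Polynomial.induction_on' with
  | add p q hp hq =>
    rw [map_add, HahnSeries.coeff_add, hp, hq, Polynomial.coeff_add]
    split <;> simp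
  | monomial n a =>
    rw [emb_monomial, HahnSeries.coeff_single, Polynomial.coeff_monomial]
    split_ifs <;> first | rfl | (exfalso; omega)

lemma polyPart_coeff (β : LaurentSeries K) (i : ℕ) :
    (polyPart β).coeff i = β.coeff (-(i:ℤ)) := by
  rw [polyPart, Polynomial.finset_sum_coeff]
  simp only [Polynomial.coeff_monomial]
  rw [Finset.sum_ite_eq' (Finset.range ((-β.order).toNat + 1)) i]
  split_ifs with h
  · rfl
  · rw [Finset.mem_range, not_lt] at h
    rcases eq_or_ne β 0 with rfl | hβ
    · simp
    · refine (HahnSeries.coeff_eq_zero_of_lt_order ?_).symm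
      omega

lemma emb_polyPart_coeff (β : LaurentSeries K) (r : ℤ) :
    (emb (polyPart β)).coeff r = if r ≤ 0 then β.coeff r else 0 := by
  rw [emb_coeff]
  split_ifs with h
  · rw [polyPart_coeff]
    congr 1
    omega
  · rfl

lemma coeff_sub_polyPart (β : LaurentSeries K) {r : ℤ} (hr : r ≤ 0) :
    (β - emb (polyPart β)).coeff r = 0 := by
  rw [HahnSeries.coeff_sub, emb_polyPart_coeff, if_pos hr, sub_self]

lemma order_sub_polyPart {β : LaurentSeries K} (h : β - emb (polyPart β) ≠ 0) :
    1 ≤ (β - emb (polyPart β)).order := by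
  by_contra hlt
  push_neg at hlt
  exact (HahnSeries.coeff_order_eq_zero.not.2 h) (coeff_sub_polyPart β (by omega))


lemma le_order_of (x : LaurentSeries K) {n : ℤ} (hx : x ≠ 0)
    (h : ∀ m < n, x.coeff m = 0) : n ≤ x.order := by
  by_contra hlt
  push_neg at hlt
  exact (HahnSeries.coeff_order_eq_zero.not.2 hx) (h _ hlt)

lemma order_eq_of {x : LaurentSeries K} {n : ℤ} (hc : x.coeff n ≠ 0)
    (h : ∀ m < n, x.coeff m = 0) : x.order = n :=
  le_antisymm (HahnSeries.order_le_of_coeff_ne_zero hc)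
    (le_order_of x (fun h0 => hc (by rw [h0]; simp)) h)

lemma emb_ne_zero {P : Polynomial K} (hP : P ≠ 0) : emb P ≠ 0 := by
  intro h
  have := emb_coeff P (-(P.natDegree : ℤ))
  rw [h] at this
  simp only [HahnSeries.coeff_zero] at this
  rw [if_pos (by omega)] at this
  simp only [neg_neg, Int.toNat_natCast] at this
  exact hP (Polynomial.leadingCoeff_eq_zero.mp this.symm)

lemma order_emb {P : Polynomial K} (hP : P ≠ 0) :
    (emb P).order = -(P.natDegree : ℤ) := by
  apply order_eq_of
  · rw [emb_coeff, if_pos (by omega)]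
    simpa using fun h => hP (Polynomial.leadingCoeff_eq_zero.mp h)
  · intro m hm
    rw [emb_coeff]
    split_ifs with h
    · exact Polynomial.coeff_eq_zero_of_natDegree_lt (by omega)
    · rfl

lemma order_inv {x : LaurentSeries K} (hx : x ≠ 0) : (x⁻¹).order = -x.order := by
  have h1 : x * x⁻¹ = 1 := mul_inv_cancel₀ hx
  have h2 := HahnSeries.order_mul hx (inv_ne_zero hx)
  rw [h1, HahnSeries.order_one] at h2
  omega

lemma emb_mul_coeff {P : Polynomial K} {N : ℕ} (hN : P.natDegree < N)
    (β : LaurentSeries K) (m : ℤ) :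
    (emb P * β).coeff m = ∑ i ∈ Finset.range N, P.coeff i * β.coeff (m + i) := by
  conv_lhs => rw [Polynomial.as_sum_range' P N hN]
  rw [map_sum, Finset.sum_mul, hahn_sum_coeff]
  refine Finset.sum_congr rfl fun i hi => ?_
  rw [emb_monomial]
  conv_lhs => rw [show m = (m + (i:ℤ)) + (-(i:ℤ)) by omega]
  rw [HahnSeries.coeff_single_mul_add]

lemma emb_mul_coeff_fin {P : Polynomial K} {j : ℕ} (hj : P.natDegree < j)
    (β : LaurentSeries K) (m : ℤ) :
    (emb P * β).coeff m = ∑ l : Fin j, P.coeff l * β.coeff (m + l) := by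
  rw [emb_mul_coeff hj β m, Finset.sum_range fun i => P.coeff i * β.coeff (m + i)]


lemma polyPart_zero : polyPart (0 : LaurentSeries K) = 0 := by
  ext i
  rw [polyPart_coeff]
  simp

lemma cq_succ_def (α : LaurentSeries K) (n : ℕ) :
    cq α (n+1) = (cq α n - emb (polyPart (cq α n)))⁻¹ := rfl

lemma cq_zero_succ {α : LaurentSeries K} {n : ℕ} (h : cq α n = 0) : cq α (n+1) = 0 := by
  rw [cq_succ_def, h, polyPart_zero, map_zero, sub_zero, inv_zero]

lemma cq_zero_add {α : LaurentSeries K} {m : ℕ} (h : cq α m = 0) (k : ℕ) :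
    cq α (m + k) = 0 := by
  induction k with
  | zero => exact h
  | succ k ih => exact cq_zero_succ ih

lemma cq_ne_zero_mono {α : LaurentSeries K} {m n : ℕ} (hmn : m ≤ n) (h : cq α n ≠ 0) :
    cq α m ≠ 0 := by
  intro h0
  obtain ⟨k, rfl⟩ := Nat.exists_eq_add_of_le hmn
  exact h (cq_zero_add h0 k)

lemma polyPart_spec {β : LaurentSeries K} (hβ : β ≠ 0) (hord : β.order ≤ 0) :
    polyPart β ≠ 0 ∧ ((polyPart β).natDegree : ℤ) = -β.order := by
  set D := (-β.order).toNat with hD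
  have hcD : (polyPart β).coeff D ≠ 0 := by
    rw [polyPart_coeff]
    have hDe : -(D:ℤ) = β.order := by omega
    rw [hDe]
    exact (HahnSeries.coeff_order_eq_zero.not.2 hβ)
  have hne : polyPart β ≠ 0 := fun h => hcD (by rw [h]; simp)
  have hle : (polyPart β).natDegree ≤ D := by
    rw [Polynomial.natDegree_le_iff_coeff_eq_zero]
    intro N hN
    rw [polyPart_coeff]
    exact HahnSeries.coeff_eq_zero_of_lt_order (by omega)
  have hge := Polynomial.le_natDegree_of_ne_zero hcD
  exact ⟨hne, by omega⟩

lemma cq_order {α : LaurentSeries K} {n : ℕ} (h : cq α (n+1) ≠ 0) :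
    (cq α (n+1)).order ≤ -1 := by
  rw [cq_succ_def] at h ⊢
  have hg : cq α n - emb (polyPart (cq α n)) ≠ 0 := fun h0 => h (by rw [h0, inv_zero])
  rw [order_inv hg]
  have := order_sub_polyPart hg
  omega

lemma pq_spec {α : LaurentSeries K} {n : ℕ} (h : cq α (n+1) ≠ 0) :
    pq α (n+1) ≠ 0 ∧ ((pq α (n+1)).natDegree : ℤ) = -(cq α (n+1)).order ∧
      1 ≤ (pq α (n+1)).natDegree := by
  have ho := cq_order h
  obtain ⟨h1, h2⟩ := polyPart_spec h (by omega)
  rw [pq]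
  exact ⟨h1, h2, by omega⟩

lemma cq_rel {α : LaurentSeries K} {n : ℕ} (h : cq α (n+1) ≠ 0) :
    cq α n = emb (pq α n) + (cq α (n+1))⁻¹ := by
  rw [cq_succ_def, inv_inv, pq]
  ring

lemma cq_term {α : LaurentSeries K} {n : ℕ} (h : cq α (n+1) = 0) :
    cq α n = emb (pq α n) := by
  rw [cq_succ_def, inv_eq_zero, sub_eq_zero] at h
  rw [pq]
  exact h

section withAlpha
variable {α : LaurentSeries K} (hα : ∀ n : ℤ, n ≤ 0 → α.coeff n = 0)
include hα

lemma pq_zero_eq : pq α 0 = 0 := by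
  ext i
  rw [pq, show cq α 0 = α from rfl, polyPart_coeff]
  simp [hα (-(i:ℤ)) (by omega)]

lemma cq_one : cq α 1 = α⁻¹ := by
  have h := pq_zero_eq hα
  rw [pq, show cq α 0 = α from rfl] at h
  rw [cq_succ_def, show cq α 0 = α from rfl, h, map_zero, sub_zero]

end withAlpha

/-- `qₙ α - pₙ` as a Laurent series. -/
def EE (α : LaurentSeries K) (n : ℕ) : LaurentSeries K :=
  emb (contQ α n) * α - emb (contP α n)

lemma contQ_zero (α : LaurentSeries K) : contQ α 0 = 1 := rfl
lemma contQ_one (α : LaurentSeries K) : contQ α 1 = pq α 1 := rfl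
lemma contP_zero (α : LaurentSeries K) : contP α 0 = pq α 0 := rfl
lemma contP_one (α : LaurentSeries K) : contP α 1 = pq α 1 * pq α 0 + 1 := rfl
lemma contQ_rec (α : LaurentSeries K) (n : ℕ) :
    contQ α (n+2) = pq α (n+2) * contQ α (n+1) + contQ α n := rfl
lemma contP_rec (α : LaurentSeries K) (n : ℕ) :
    contP α (n+2) = pq α (n+2) * contP α (n+1) + contP α n := rfl

lemma EE_rec (α : LaurentSeries K) (n : ℕ) :
    EE α (n+2) = emb (pq α (n+2)) * EE α (n+1) + EE α n := by
  rw [EE, EE, EE, contQ_rec, contP_rec, map_add, map_mul, map_add, map_mul]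
  ring

lemma lemD (α : LaurentSeries K) (n : ℕ) :
    contP α (n+1) * contQ α n - contP α n * contQ α (n+1) = (-1)^n := by
  induction n with
  | zero => rw [contP_one, contQ_zero, contP_zero, contQ_one]; ring
  | succ n ih =>
    rw [contP_rec, contQ_rec]
    linear_combination -ih

section withAlpha2
variable {α : LaurentSeries K} (hα : ∀ n : ℤ, n ≤ 0 → α.coeff n = 0)
include hα

lemma EE_zero : EE α 0 = α := by
  rw [EE, contQ_zero, contP_zero, pq_zero_eq hα, map_zero, map_one, sub_zero, one_mul]

lemma EE_one : EE α 1 = emb (pq α 1) * α - 1 := by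
  rw [EE, contQ_one, contP_one, pq_zero_eq hα]
  simp

lemma lemA_base (h : cq α 1 ≠ 0) : cq α 1 * EE α 0 = 1 := by
  rw [EE_zero hα, cq_one hα]
  have hα0 : α ≠ 0 := by
    intro h0
    rw [cq_one hα, h0, inv_zero] at h
    exact h rfl
  exact inv_mul_cancel₀ hα0

lemma lemA : ∀ n, cq α (n+2) ≠ 0 → cq α (n+2) * EE α (n+1) = -EE α n := by
  intro n
  induction n with
  | zero =>
    intro h
    have h1 : cq α 1 ≠ 0 := cq_ne_zero_mono (by omega) h
    have hα0 : α ≠ 0 := by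
      intro h0
      rw [cq_one hα, h0, inv_zero] at h1
      exact h1 rfl
    have rel := cq_rel h
    rw [cq_one hα] at rel
    have h2 : cq α 2 * (cq α 2)⁻¹ = 1 := mul_inv_cancel₀ h
    have h1' : α⁻¹ * α = 1 := inv_mul_cancel₀ hα0
    rw [EE_one hα, EE_zero hα]
    linear_combination (-(cq α 2 * α)) * rel + cq α 2 * h1' + (-α) * h2
  | succ n ih =>
    intro h
    have h2 : cq α (n+2) ≠ 0 := cq_ne_zero_mono (by omega) h
    have ih' := ih h2
    have rel := cq_rel h
    have h3 : cq α (n+3) * (cq α (n+3))⁻¹ = 1 := mul_inv_cancel₀ h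
    rw [EE_rec]
    linear_combination (-(cq α (n+3) * EE α (n+1))) * rel + cq α (n+3) * ih' +
      (-(EE α (n+1))) * h3

end withAlpha2

lemma degQ {α : LaurentSeries K} : ∀ n, cq α (n+1) ≠ 0 →
    contQ α (n+1) ≠ 0 ∧
      (contQ α (n+1)).natDegree = (pq α (n+1)).natDegree + (contQ α n).natDegree := by
  intro n
  induction n with
  | zero =>
    intro h
    obtain ⟨h1, _, _⟩ := pq_spec h
    rw [contQ_one, contQ_zero]
    simpa using h1
  | succ n ih =>
    intro h
    have h2 : cq α (n+1) ≠ 0 := cq_ne_zero_mono (by omega) h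
    obtain ⟨hq1, hdeg1⟩ := ih h2
    obtain ⟨ha1, _, had1⟩ := pq_spec h2
    obtain ⟨ha2, _, had2⟩ := pq_spec h
    have hmul : (pq α (n+2) * contQ α (n+1)).natDegree =
        (pq α (n+2)).natDegree + (contQ α (n+1)).natDegree :=
      Polynomial.natDegree_mul ha2 hq1
    have hlt : (contQ α n).natDegree < (pq α (n+2) * contQ α (n+1)).natDegree := by
      rw [hmul]
      omega
    have hadd : (contQ α (n+2)).natDegree = (pq α (n+2) * contQ α (n+1)).natDegree := by
      rw [contQ_rec]
      exact Polynomial.natDegree_add_eq_left_of_natDegree_lt hlt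
    constructor
    · apply Polynomial.ne_zero_of_natDegree_gt (n := 0)
      rw [hadd, hmul]
      omega
    · rw [hadd, hmul]

lemma contQ_valid_ne_zero {α : LaurentSeries K} {n : ℕ} (h : n = 0 ∨ cq α n ≠ 0) :
    contQ α n ≠ 0 := by
  rcases h with rfl | h
  · rw [contQ_zero]; exact one_ne_zero
  · cases n with
    | zero => rw [contQ_zero]; exact one_ne_zero
    | succ n => exact (degQ n h).1

lemma degQ_ge {α : LaurentSeries K} : ∀ n, (n = 0 ∨ cq α n ≠ 0) →
    n ≤ (contQ α n).natDegree := by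
  intro n
  induction n with
  | zero => intro _; omega
  | succ n ih =>
    intro h
    rcases h with h | h
    · omega
    · have h2 : n = 0 ∨ cq α n ≠ 0 := by
        cases n with
        | zero => left; rfl
        | succ m => right; exact cq_ne_zero_mono (by omega) h
      have := ih h2
      obtain ⟨_, hdeg⟩ := degQ n h
      obtain ⟨_, _, had⟩ := pq_spec h
      omega

section withAlpha3
variable {α : LaurentSeries K} (hα : ∀ n : ℤ, n ≤ 0 → α.coeff n = 0)
include hα

lemma ordEE : ∀ n, cq α (n+1) ≠ 0 →
    EE α n ≠ 0 ∧ (EE α n).order = ((contQ α (n+1)).natDegree : ℤ) := by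
  intro n
  induction n with
  | zero =>
    intro h
    have hα0 : α ≠ 0 := by
      intro h0
      rw [cq_one hα, h0, inv_zero] at h
      exact h rfl
    have hordinv : (cq α 1).order = -α.order := by rw [cq_one hα]; exact order_inv hα0
    obtain ⟨_, hdeg, _⟩ := pq_spec (n := 0) h
    simp only [Nat.zero_add] at hdeg
    rw [EE_zero hα]
    refine ⟨hα0, ?_⟩
    rw [contQ_one]
    omega
  | succ n ih =>
    intro h
    have h2 : cq α (n+1) ≠ 0 := cq_ne_zero_mono (by omega) h
    obtain ⟨hE, hord⟩ := ih h2
    have hA := lemA hα n h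
    have hEne : EE α (n+1) ≠ 0 := by
      intro h0
      rw [h0, mul_zero] at hA
      exact hE (by rw [← neg_neg (EE α n), ← hA, neg_zero])
    have horder := HahnSeries.order_mul h hEne
    rw [hA, HahnSeries.order_neg, hord] at horder
    obtain ⟨_, hdeg, _⟩ := pq_spec h
    obtain ⟨_, hdq⟩ := degQ (n+1) h
    refine ⟨hEne, ?_⟩
    rw [hdq]
    push_cast
    omega

lemma lemB : ∀ n, (n = 0 ∨ cq α n ≠ 0) → cq α (n+1) = 0 → EE α n = 0 := by
  intro n hvalid hterm
  rcases n with _ | n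
  · rw [EE_zero hα]
    rw [cq_one hα, inv_eq_zero] at hterm
    exact hterm
  · have hn : cq α (n+1) ≠ 0 := hvalid.resolve_left (by omega)
    have ht := cq_term hterm
    rcases n with _ | m
    · have hb := lemA_base hα hn
      rw [EE_zero hα] at hb
      rw [EE_one hα, ← ht]
      linear_combination hb
    · have hA := lemA hα m hn
      rw [EE_rec, ← ht, hA]
      ring

end withAlpha3

lemma hankel_mulVec {α : LaurentSeries K} {j : ℕ} {q : Polynomial K}
    (hq : q.natDegree < j) (k : Fin j) :
    (hankel α j).mulVec (fun l => q.coeff l.1) k = (emb q * α).coeff ((k.1:ℤ) + 1) := by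
  rw [Matrix.mulVec, dotProduct, emb_mul_coeff_fin hq α ((k.1:ℤ)+1)]
  refine Finset.sum_congr rfl fun l _ => ?_
  rw [hankel, Matrix.of_apply, mul_comm]
  congr 2
  omega


end PaperCF

open PaperCF in
/-- For `α ∈ K((T⁻¹))` of positive order and `j ≥ 1`, `α` has a
convergent `pₙ/qₙ` with `deg qₙ = j` iff the `j`-th Hankel determinant is non-zero. -/
theorem hankel_det_ne_zero_iff_exists_convergent {K : Type*} [Field K]
    (α : LaurentSeries K) (hα : ∀ n : ℤ, n ≤ 0 → α.coeff n = 0)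
    (j : ℕ) (hj : 1 ≤ j) :
    (∃ n : ℕ, ConvAt α n ∧ (contQ α n).natDegree = j) ↔ (hankel α j).det ≠ 0 := by
  classical
  constructor
  · rintro ⟨n, hcv, hdeg⟩ hdet0
    rcases n with _ | k
    · rw [contQ_zero] at hdeg
      simp only [Polynomial.natDegree_one] at hdeg
      omega
    have hn : cq α (k+1) ≠ 0 := hcv.resolve_left (by omega)
    obtain ⟨v, hv0, hvker⟩ := (Matrix.exists_mulVec_eq_zero_iff).mpr hdet0
    set q' : Polynomial K := ∑ l : Fin j, Polynomial.monomial l.1 (v l) with hq'def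
    have hq'coeff : ∀ i : ℕ, q'.coeff i = if h : i < j then v ⟨i, h⟩ else 0 := by
      intro i
      rw [hq'def, Polynomial.finset_sum_coeff]
      simp only [Polynomial.coeff_monomial]
      split_ifs with h
      · rw [Finset.sum_eq_single (⟨i, h⟩ : Fin j)]
        · simp
        · intro b _ hb
          rw [if_neg]
          intro he
          exact hb (Fin.ext (show (b : ℕ) = ((⟨i, h⟩ : Fin j) : ℕ) from he))
        · exact fun hmem => absurd (Finset.mem_univ _) hmem
      · refine Finset.sum_eq_zero fun l _ => ?_
        rw [if_neg]
        exact fun he => h (he ▸ l.isLt)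
    have hq'ne : q' ≠ 0 := by
      obtain ⟨l, hl⟩ := Function.ne_iff.mp hv0
      intro h0
      have := hq'coeff l.1
      rw [h0, Polynomial.coeff_zero, dif_pos l.isLt] at this
      apply hl
      simpa using this.symm
    have hq'deg : q'.natDegree < j := by
      have : q'.natDegree ≤ j - 1 := by
        rw [Polynomial.natDegree_le_iff_coeff_eq_zero]
        intro N hN
        rw [hq'coeff, dif_neg (by omega)]
      omega
    have hfv : (fun l : Fin j => q'.coeff l.1) = v := by
      funext l
      rw [hq'coeff, dif_pos l.isLt]
    set p' : Polynomial K := polyPart (emb q' * α) with hp'def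
    set E' : LaurentSeries K := emb q' * α - emb p' with hE'def
    have hE'pos : ∀ r : ℤ, 1 ≤ r → r ≤ j → (emb q' * α).coeff r = 0 := by
      intro r h1 h2
      have hk : (r-1).toNat < j := by omega
      have := hankel_mulVec (α := α) hq'deg ⟨(r-1).toNat, hk⟩
      rw [hfv, hvker] at this
      have hr : (((r-1).toNat : ℤ) + 1) = r := by omega
      rw [hr] at this
      rw [← this]
      rfl
    have hE'all : ∀ r : ℤ, r ≤ j → E'.coeff r = 0 := by
      intro r hr
      rcases le_or_gt r 0 with h0 | h0
      · rw [hE'def, hp'def]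
        exact coeff_sub_polyPart _ h0
      · rw [hE'def, HahnSeries.coeff_sub, hE'pos r h0 hr, hp'def,
          emb_polyPart_coeff, if_neg (by omega), sub_zero]
    -- continued fraction data
    obtain ⟨hEk, hordk⟩ := ordEE hα k hn
    rw [hdeg] at hordk
    have hQ1ne : contQ α (k+1) ≠ 0 := (degQ k hn).1
    have hQ0ne : contQ α k ≠ 0 := by
      apply contQ_valid_ne_zero
      rcases k with _ | k0
      · exact Or.inl rfl
      · exact Or.inr (cq_ne_zero_mono (by omega) hn)
    have hQ0deg : (contQ α k).natDegree < j := by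
      obtain ⟨_, hdq⟩ := degQ k hn
      obtain ⟨_, _, ha⟩ := pq_spec hn
      omega
    have hD := lemD α k
    have hsq : ((-1 : Polynomial K)^k) * ((-1)^k) = 1 := by
      rw [← pow_add]
      exact Even.neg_one_pow ⟨k, by ring⟩
    set u : Polynomial K := (-1)^k * (p' * contQ α k - q' * contP α k) with hu
    set w : Polynomial K := (-1)^k * (contP α (k+1) * q' - contQ α (k+1) * p') with hw
    have key : q' = u * contQ α (k+1) + w * contQ α k := by
      rw [hu, hw]
      linear_combination (-((-1 : Polynomial K)^k * q')) * hD + (-q') * hsq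
    have key2 : p' = u * contP α (k+1) + w * contP α k := by
      rw [hu, hw]
      linear_combination (-((-1 : Polynomial K)^k * p')) * hD + (-p') * hsq
    have hdecomp : E' = emb u * EE α (k+1) + emb w * EE α k := by
      rw [hE'def]
      conv_lhs => rw [key, key2]
      simp only [EE, map_add, map_mul]
      ring
    have hw0 : w ≠ 0 := by
      intro hw0
      rw [hw0, zero_mul, add_zero] at key
      by_cases hu0 : u = 0
      · rw [hu0, zero_mul] at key
        exact hq'ne key
      · have hmul : q'.natDegree = u.natDegree + (contQ α (k+1)).natDegree := by
          rw [key]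
          exact Polynomial.natDegree_mul hu0 hQ1ne
        rw [hdeg] at hmul
        omega
    have huw : u ≠ 0 → u.natDegree ≤ w.natDegree := by
      intro hu0
      have hsub : w * contQ α k = q' - u * contQ α (k+1) := by
        rw [key]; ring
      have hlt : q'.natDegree < (u * contQ α (k+1)).natDegree := by
        rw [Polynomial.natDegree_mul hu0 hQ1ne, hdeg]
        omega
      have hdsub : (q' - u * contQ α (k+1)).natDegree
          = (u * contQ α (k+1)).natDegree := by
        rw [sub_eq_add_neg]
        rw [Polynomial.natDegree_add_eq_right_of_natDegree_lt
          (by rwa [Polynomial.natDegree_neg])]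
        exact Polynomial.natDegree_neg _
      have hmulw : w.natDegree + (contQ α k).natDegree
          = u.natDegree + (contQ α (k+1)).natDegree := by
        rw [← Polynomial.natDegree_mul hw0 hQ0ne, hsub, hdsub,
          Polynomial.natDegree_mul hu0 hQ1ne]
      rw [hdeg] at hmulw
      omega
    set m : ℤ := (j : ℤ) - w.natDegree with hm
    have hmj : m ≤ j := by
      have : (0:ℤ) ≤ w.natDegree := by positivity
      omega
    have hwE : (emb w * EE α k).coeff m ≠ 0 := by
      have hne : emb w * EE α k ≠ 0 := mul_ne_zero (emb_ne_zero hw0) hEk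
      have hord : (emb w * EE α k).order = m := by
        rw [HahnSeries.order_mul (emb_ne_zero hw0) hEk, order_emb hw0, hordk, hm]
        ring
      rw [← hord]
      exact (HahnSeries.coeff_order_eq_zero.not.2 hne)
    have huE : (emb u * EE α (k+1)).coeff m = 0 := by
      by_cases hu0 : u = 0
      · rw [hu0, map_zero, zero_mul, HahnSeries.coeff_zero]
      · rcases eq_or_ne (cq α (k+2)) 0 with hterm | hterm
        · rw [lemB hα (k+1) (Or.inr hn) hterm, mul_zero, HahnSeries.coeff_zero]
        · obtain ⟨hE1, hord1⟩ := ordEE hα (k+1) hterm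
          have hord1' : (EE α (k+1)).order = ((contQ α (k+2)).natDegree : ℤ) := hord1
          apply HahnSeries.coeff_eq_zero_of_lt_order
          rw [HahnSeries.order_mul (emb_ne_zero hu0) hE1, order_emb hu0, hord1']
          have hdq2 : (contQ α (k+1)).natDegree < (contQ α (k+2)).natDegree := by
            obtain ⟨_, hdq⟩ := degQ (k+1) hterm
            have hdq' : (contQ α (k+2)).natDegree
                = (pq α (k+2)).natDegree + (contQ α (k+1)).natDegree := hdq
            obtain ⟨_, _, ha⟩ := pq_spec hterm
            have ha' : 1 ≤ (pq α (k+2)).natDegree := ha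
            omega
          have := huw hu0
          rw [hdeg] at hdq2
          omega
    have : E'.coeff m ≠ 0 := by
      rw [hdecomp, HahnSeries.coeff_add, huE, zero_add]
      exact hwE
    exact this (hE'all m hmj)
  · intro hdet
    by_contra hne
    push_neg at hne
    apply hdet
    let P : ℕ → Prop := fun mm => (mm = 0 ∨ cq α mm ≠ 0) ∧ (contQ α mm).natDegree < j
    have hP0 : P 0 := ⟨Or.inl rfl, by rw [contQ_zero, Polynomial.natDegree_one]; omega⟩
    have hPn : P (Nat.findGreatest P j) := Nat.findGreatest_spec (Nat.zero_le j) hP0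
    set n : ℕ := Nat.findGreatest P j with hndef
    have hgr : ∀ m, n < m → m ≤ j → ¬ P m := by
      intro m h1 h2
      rw [hndef] at h1
      exact Nat.findGreatest_is_greatest h1 h2
    have hcoeff : ∀ r : ℤ, 1 ≤ r → r ≤ j → (EE α n).coeff r = 0 := by
      rcases eq_or_ne (cq α (n+1)) 0 with hterm | hterm
      · rw [lemB hα n hPn.1 hterm]
        intro r _ _
        exact HahnSeries.coeff_zero
      · obtain ⟨hEn, hordn⟩ := ordEE hα n hterm
        have hne1 : (contQ α (n+1)).natDegree ≠ j := by
          intro h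
          exact hne (n+1) (Or.inr hterm) h
        have hge : j + 1 ≤ (contQ α (n+1)).natDegree := by
          rcases lt_trichotomy ((contQ α (n+1)).natDegree) j with hlt | heq | hgt2
          · exfalso
            have hle : n + 1 ≤ j := le_trans (degQ_ge (n+1) (Or.inr hterm)) hlt.le
            exact hgr (n+1) (by omega) hle ⟨Or.inr hterm, hlt⟩
          · exact absurd heq hne1
          · omega
        intro r h1 h2
        apply HahnSeries.coeff_eq_zero_of_lt_order
        rw [hordn]
        omega
    have hqne : contQ α n ≠ 0 := contQ_valid_ne_zero hPn.1
    have hdegn : (contQ α n).natDegree < j := hPn.2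
    set v : Fin j → K := fun l => (contQ α n).coeff l.1 with hvdef
    have hv0 : v ≠ 0 := by
      intro h0
      have h1 := congrFun h0 ⟨(contQ α n).natDegree, hdegn⟩
      simp only [hvdef, Pi.zero_apply] at h1
      exact hqne (Polynomial.leadingCoeff_eq_zero.mp h1)
    have hker : (hankel α j).mulVec v = 0 := by
      funext kk
      rw [hvdef, hankel_mulVec hdegn kk]
      have hsplit : (emb (contQ α n) * α).coeff ((kk.1:ℤ)+1)
          = (EE α n).coeff ((kk.1:ℤ)+1) + (emb (contP α n)).coeff ((kk.1:ℤ)+1) := by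
        rw [EE, HahnSeries.coeff_sub]
        ring
      have hklt := kk.isLt
      rw [hsplit, hcoeff _ (by omega) (by omega), emb_coeff, if_neg (by omega)]
      simp
    exact Matrix.exists_mulVec_eq_zero_iff.mp ⟨v, hv0, hker⟩
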